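/- Let A = [[A₁, A₂],[A₃, A₄]] be a block matrix over a field, and suppose A₁ = P₁ [L₁; M₁][U₁ V₁] Q₁ with P₁, Q₁ permutations, L₁ unit lower triangular r₁×r₁, U₁ upper triangular invertible r₁×r₁. Set [B₁; B₂] = P₁ᵀ A₂, [C₁ C₂] = A₃ Q₁ᵀ, D = L₁⁻¹B₁, E = C₁U₁⁻¹, F = B₂ − M₁D, G = C₂ − EV₁, H = A₄ − ED. Then A = diag(P₁, I) · [[L₁, 0, 0],[M₁, I, 0],[E, 0, I]] · [[U₁, V₁, D],[0, 0, F],[0, G, H]] · diag(Q₁, I). -/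

import Mathlib

open Matrix

lemma perm_mul_transpose_eq_one (F : Type*) [Semiring F] {n : Type*} [Fintype n] [DecidableEq n]
    (σ : Equiv.Perm n) : σ.permMatrix F * (σ.permMatrix F)ᵀ = 1 := by
  rw [Equiv.Perm.permMatrix, ← PEquiv.toMatrix_symm, ← Equiv.toPEquiv_symm,
    ← PEquiv.toMatrix_trans, ← Equiv.toPEquiv_trans]
  simp

lemma transpose_mul_perm_eq_one (F : Type*) [Semiring F] {n : Type*} [Fintype n] [DecidableEq n]
    (σ : Equiv.Perm n) : (σ.permMatrix F)ᵀ * σ.permMatrix F = 1 := by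
  rw [Equiv.Perm.permMatrix, ← PEquiv.toMatrix_symm, ← Equiv.toPEquiv_symm,
    ← PEquiv.toMatrix_trans, ← Equiv.toPEquiv_trans]
  simp

theorem pluq_first_update_step (F : Type*) [Field F] {r₁ k₂ k' l₂ l' : ℕ}
    (A₁ : Matrix (Fin r₁ ⊕ Fin k₂) (Fin r₁ ⊕ Fin l₂) F)
    (A₂ : Matrix (Fin r₁ ⊕ Fin k₂) (Fin l') F)
    (A₃ : Matrix (Fin k') (Fin r₁ ⊕ Fin l₂) F)
    (A₄ : Matrix (Fin k') (Fin l') F)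
    (σ₁ : Equiv.Perm (Fin r₁ ⊕ Fin k₂)) (τ₁ : Equiv.Perm (Fin r₁ ⊕ Fin l₂))
    (L₁ : Matrix (Fin r₁) (Fin r₁) F) (M₁ : Matrix (Fin k₂) (Fin r₁) F)
    (U₁ : Matrix (Fin r₁) (Fin r₁) F) (V₁ : Matrix (Fin r₁) (Fin l₂) F)
    (hL₁tri : ∀ i j : Fin r₁, i < j → L₁ i j = 0) (hL₁diag : ∀ i : Fin r₁, L₁ i i = 1)
    (hU₁tri : ∀ i j : Fin r₁, j < i → U₁ i j = 0) (hU₁diag : ∀ i : Fin r₁, U₁ i i ≠ 0)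
    (hA₁ : A₁ = σ₁.permMatrix F * fromRows L₁ M₁ * fromCols U₁ V₁ * τ₁.permMatrix F)
    (B₁ : Matrix (Fin r₁) (Fin l') F) (B₂ : Matrix (Fin k₂) (Fin l') F)
    (hB : fromRows B₁ B₂ = (σ₁.permMatrix F)ᵀ * A₂)
    (C₁ : Matrix (Fin k') (Fin r₁) F) (C₂ : Matrix (Fin k') (Fin l₂) F)
    (hC : fromCols C₁ C₂ = A₃ * (τ₁.permMatrix F)ᵀ)
    (D : Matrix (Fin r₁) (Fin l') F) (hD : L₁ * D = B₁)
    (E : Matrix (Fin k') (Fin r₁) F) (hE : E * U₁ = C₁)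
    (G : Matrix (Fin k') (Fin l₂) F) (hG : G = C₂ - E * V₁)
    (Fm : Matrix (Fin k₂) (Fin l') F) (hF : Fm = B₂ - M₁ * D)
    (H : Matrix (Fin k') (Fin l') F) (hH : H = A₄ - E * D) :
    fromBlocks A₁ A₂ A₃ A₄ =
      fromBlocks (σ₁.permMatrix F) 0 0 (1 : Matrix (Fin k') (Fin k') F) *
      (fromBlocks (fromBlocks L₁ 0 M₁ 1) 0 (fromCols E 0) 1 :
        Matrix ((Fin r₁ ⊕ Fin k₂) ⊕ Fin k') ((Fin r₁ ⊕ Fin k₂) ⊕ Fin k') F) *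
      fromBlocks (fromBlocks U₁ V₁ 0 0) (fromRows D Fm) (fromCols 0 G) H *
      fromBlocks (τ₁.permMatrix F) 0 0 (1 : Matrix (Fin l') (Fin l') F) := by
  have hA2 : A₂ = σ₁.permMatrix F * fromRows B₁ B₂ := by
    rw [hB, ← Matrix.mul_assoc, perm_mul_transpose_eq_one, Matrix.one_mul]
  have hA3 : A₃ = fromCols C₁ C₂ * τ₁.permMatrix F := by
    rw [hC, Matrix.mul_assoc, transpose_mul_perm_eq_one, Matrix.mul_one]
  rw [fromBlocks_multiply, fromBlocks_multiply, fromBlocks_multiply, fromBlocks_inj]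
  refine ⟨?_, ?_, ?_, ?_⟩
  · rw [hA₁]
    simp only [Matrix.mul_zero, Matrix.zero_mul, add_zero, zero_add, Matrix.one_mul,
      Matrix.mul_one]
    rw [Matrix.mul_assoc (σ₁.permMatrix F) (fromRows L₁ M₁),
      Matrix.mul_assoc (σ₁.permMatrix F) (fromBlocks L₁ 0 M₁ 1),
      fromRows_mul_fromCols, fromBlocks_multiply]
    simp
  · rw [hA2]
    simp only [Matrix.mul_zero, Matrix.zero_mul, add_zero, zero_add, Matrix.one_mul,
      Matrix.mul_one]
    rw [Matrix.mul_assoc, fromBlocks_mul_fromRows]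
    congr 1
    rw [hF, hD]
    simp
  · rw [hA3]
    simp only [Matrix.mul_zero, Matrix.zero_mul, add_zero, zero_add, Matrix.one_mul,
      Matrix.mul_one]
    rw [fromCols_mul_fromBlocks]
    congr 1
    rw [hG, hE]
    ext i (j | j) <;> simp
  · rw [hH]
    simp only [Matrix.mul_zero, Matrix.zero_mul, add_zero, zero_add, Matrix.one_mul,
      Matrix.mul_one]
    rw [fromCols_mul_fromRows]
    simp
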